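/- Let T be a tree with positive integer edge weights and no degree-2 vertices. Let (v_0, v_1, ..., v_k) be a path in T such that v_0 has minimum leaf-status in T. Then ℓ(v_0) ≤ ℓ(v_1) < ℓ(v_2) < ... < ℓ(v_k): the leaf-status is non-decreasing at the first step and strictly increasing thereafter along the path. -/

import Mathlib

open SimpleGraph Finset

noncomputable section

variable {V : Type*}

/-- The weight of a walk: sum of the weights of its edges. -/
def walkWeight {G : SimpleGraph V} (w : Sym2 V → ℝ) {x y : V} (p : G.Walk x y) : ℝ :=
  (p.edges.map w).sum

/-- The unique path between two vertices of a tree. -/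
noncomputable def tpath {G : SimpleGraph V} (hT : G.IsTree) (x y : V) : G.Walk x y :=
  (hT.existsUnique_path x y).choose

/-- The weighted distance between two vertices of a tree: the weight of the unique path. -/
noncomputable def tdist {G : SimpleGraph V} (hT : G.IsTree) (w : Sym2 V → ℝ) (x y : V) : ℝ :=
  walkWeight w (tpath hT x y)

/-- The distance from a vertex `x` to a path `p`: the minimum distance from `x`
to a vertex on `p`. -/
noncomputable def distToPath {G : SimpleGraph V} (hT : G.IsTree) (w : Sym2 V → ℝ)
    (x : V) {a b : V} (p : G.Walk a b) : ℝ :=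
  sInf {r | ∃ y ∈ p.support, r = tdist hT w x y}

/-- The set of leaves of a graph. -/
def leaves (G : SimpleGraph V) [Fintype V] [DecidableRel G.Adj] : Finset V :=
  Finset.univ.filter (fun v => G.degree v = 1)

/-- The leaf-status of a vertex: the sum of its distances to all leaves. -/
noncomputable def leafStatus {G : SimpleGraph V} [Fintype V] [DecidableRel G.Adj]
    (hT : G.IsTree) (w : Sym2 V → ℝ) (u : V) : ℝ :=
  ∑ x ∈ leaves G, tdist hT w u x

/-- The leaf-status of a path: the sum of the distances of all leaves to the path. -/
noncomputable def pathLeafStatus {G : SimpleGraph V} [Fintype V] [DecidableRel G.Adj]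
    (hT : G.IsTree) (w : Sym2 V → ℝ) {a b : V} (p : G.Walk a b) : ℝ :=
  ∑ x ∈ leaves G, distToPath hT w x p

/-- `Lside hT w u v` is the set `L^{uv}_u` of leaves strictly closer to `u` than to `v`. -/
noncomputable def Lside {G : SimpleGraph V} [Fintype V] [DecidableRel G.Adj]
    (hT : G.IsTree) (w : Sym2 V → ℝ) (u v : V) : Finset V :=
  (leaves G).filter (fun x => tdist hT w x u < tdist hT w x v)

section Aux

variable {G : SimpleGraph V}

lemma tpath_isPath (hT : G.IsTree) (x y : V) : (tpath hT x y).IsPath :=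
  (hT.existsUnique_path x y).choose_spec.1

lemma tpath_unique (hT : G.IsTree) {x y : V} {p : G.Walk x y} (hp : p.IsPath) :
    p = tpath hT x y :=
  (hT.existsUnique_path x y).choose_spec.2 p hp

lemma tpath_reverse (hT : G.IsTree) (x y : V) :
    tpath hT y x = (tpath hT x y).reverse :=
  (tpath_unique hT ((tpath_isPath hT x y).reverse)).symm

lemma mem_tpath_comm (hT : G.IsTree) {a b c : V} :
    c ∈ (tpath hT a b).support ↔ c ∈ (tpath hT b a).support := by
  rw [tpath_reverse hT a b, SimpleGraph.Walk.support_reverse, List.mem_reverse]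

lemma walkWeight_concat (w : Sym2 V → ℝ) {x u v : V} (p : G.Walk x u) (h : G.Adj u v) :
    walkWeight w (p.concat h) = walkWeight w p + w s(u, v) := by
  simp [walkWeight, SimpleGraph.Walk.edges_concat]

lemma tdist_comm (hT : G.IsTree) (w : Sym2 V → ℝ) (x y : V) :
    tdist hT w x y = tdist hT w y x := by
  rw [tdist, tdist, tpath_reverse hT x y, walkWeight, walkWeight,
    SimpleGraph.Walk.edges_reverse, List.map_reverse, List.sum_reverse]

/-- If `v` is not on the path from `x` to `u`, the path to `v` extends it. -/
lemma tpath_concat (hT : G.IsTree) {x u v : V} (h : G.Adj u v)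
    (hv : v ∉ (tpath hT x u).support) :
    tpath hT x v = (tpath hT x u).concat h := by
  refine (tpath_unique hT ?_).symm
  rw [SimpleGraph.Walk.isPath_def, SimpleGraph.Walk.support_concat]
  exact List.Nodup.append (tpath_isPath hT x u).support_nodup (List.nodup_singleton v)
    (by simpa using hv)

/-- Consequences of a concat decomposition of the unique path. -/
lemma concat_props (hT : G.IsTree) (w : Sym2 V → ℝ) {x a b : V} (h : G.Adj a b)
    (heq : tpath hT x b = (tpath hT x a).concat h) :
    b ∉ (tpath hT x a).support ∧ a ∈ (tpath hT x b).support ∧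
      tdist hT w x b = tdist hT w x a + w s(a, b) := by
  refine ⟨?_, ?_, ?_⟩
  · intro hb
    have hnd := (tpath_isPath hT x b).support_nodup
    rw [heq, SimpleGraph.Walk.support_concat] at hnd
    rw [List.nodup_append] at hnd
    exact hnd.2.2 b hb b (by simp) rfl
  · rw [heq, SimpleGraph.Walk.support_concat]
    exact List.mem_append_left _ ((tpath hT x a).end_mem_support)
  · rw [tdist, tdist, heq, walkWeight_concat]

/-- The fundamental dichotomy for an edge `a b` and any vertex `x`. -/
lemma tpath_dichotomy (hT : G.IsTree) {x u v : V} (h : G.Adj u v) :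
    tpath hT x v = (tpath hT x u).concat h ∨
      tpath hT x u = (tpath hT x v).concat h.symm := by
  classical
  by_cases hv : v ∈ (tpath hT x u).support
  · right
    have hq : (tpath hT x u).takeUntil v hv = tpath hT x v :=
      tpath_unique hT ((tpath_isPath hT x u).takeUntil hv)
    have hr : (tpath hT x u).dropUntil v hv = tpath hT v u :=
      tpath_unique hT ((tpath_isPath hT x u).dropUntil hv)
    have h2 : (SimpleGraph.Walk.cons h.symm (SimpleGraph.Walk.nil : G.Walk u u)).IsPath := by
      rw [SimpleGraph.Walk.cons_isPath_iff]
      exact ⟨SimpleGraph.Walk.IsPath.nil, by simp [h.ne']⟩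
    have hr2 : tpath hT v u = SimpleGraph.Walk.cons h.symm SimpleGraph.Walk.nil :=
      (tpath_unique hT h2).symm
    calc tpath hT x u
        = ((tpath hT x u).takeUntil v hv).append ((tpath hT x u).dropUntil v hv) :=
          ((tpath hT x u).take_spec hv).symm
      _ = (tpath hT x v).append (SimpleGraph.Walk.cons h.symm SimpleGraph.Walk.nil) := by
          rw [hq, hr, hr2]
      _ = (tpath hT x v).concat h.symm := (SimpleGraph.Walk.concat_eq_append _ _).symm
  · left
    exact tpath_concat hT h hv

lemma dist_eq_of_mem (hT : G.IsTree) (w : Sym2 V → ℝ) {x u v : V} (h : G.Adj u v)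
    (hm : u ∈ (tpath hT x v).support) :
    tdist hT w x v = tdist hT w x u + w s(u, v) := by
  rcases tpath_dichotomy hT (x := x) h with heq | heq
  · exact (concat_props hT w h heq).2.2
  · exact absurd hm (concat_props hT w h.symm heq).1

lemma mem_opp (hT : G.IsTree) {x u v : V} (h : G.Adj u v) :
    v ∈ (tpath hT x u).support ↔ u ∉ (tpath hT x v).support := by
  rcases tpath_dichotomy hT (x := x) h with heq | heq
  · obtain ⟨h1, h2, _⟩ := concat_props hT (fun _ => (0 : ℝ)) h heq
    simp [h1, h2]
  · obtain ⟨h1, h2, _⟩ := concat_props hT (fun _ => (0 : ℝ)) h.symm heq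
    simp [h1, h2]

/-- Nesting: if the path from `x` to `b` passes through `a`, where `a — b — c` are
consecutive distinct vertices, then the path from `x` to `c` passes through `b`. -/
lemma tpath_nest (hT : G.IsTree) {x a b c : V} (hab : G.Adj a b) (hbc : G.Adj b c)
    (hac : a ≠ c) (h : a ∈ (tpath hT x b).support) :
    b ∈ (tpath hT x c).support := by
  classical
  by_contra hb
  -- from h : a ∈ tpath x b, we get tpath x b = (tpath x a).concat hab
  have heq1 : tpath hT x b = (tpath hT x a).concat hab := by
    rcases tpath_dichotomy hT (x := x) hab with heq | heq
    · exact heq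
    · exact absurd h (concat_props hT (fun _ => (0:ℝ)) hab.symm heq).1
  have hbna : b ∉ (tpath hT x a).support := (concat_props hT (fun _ => (0:ℝ)) hab heq1).1
  -- from hb, tpath x b = (tpath x c).concat hbc.symm, so c ∈ tpath x b
  have hcb : c ∈ (tpath hT x b).support := by
    rcases tpath_dichotomy hT (x := x) hbc with heq | heq
    · exact absurd (concat_props hT (fun _ => (0:ℝ)) hbc heq).2.1 hb
    · exact (concat_props hT (fun _ => (0:ℝ)) hbc.symm heq).2.1
  have hca : c ∈ (tpath hT x a).support := by
    rw [heq1, SimpleGraph.Walk.support_concat] at hcb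
    rcases List.mem_append.1 hcb with hh | hh
    · exact hh
    · exact absurd (List.mem_singleton.1 hh) hbc.ne'
  -- the path from c to a is c — b — a, which contains b; but it is inside tpath x a
  have hdrop : (tpath hT x a).dropUntil c hca = tpath hT c a :=
    tpath_unique hT ((tpath_isPath hT x a).dropUntil hca)
  have h2 : (SimpleGraph.Walk.cons hbc.symm
      (SimpleGraph.Walk.cons hab.symm SimpleGraph.Walk.nil) : G.Walk c a).IsPath := by
    rw [SimpleGraph.Walk.isPath_def]
    simp [hbc.ne', hac, (Ne.symm hac), hab.ne, hab.ne']
  have h3 : tpath hT c a = SimpleGraph.Walk.cons hbc.symm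
      (SimpleGraph.Walk.cons hab.symm SimpleGraph.Walk.nil) := (tpath_unique hT h2).symm
  have hbmem : b ∈ (tpath hT c a).support := by
    rw [h3]; simp
  rw [← hdrop] at hbmem
  exact hbna ((tpath hT x a).support_dropUntil_subset hca hbmem)

/-- Two neighbours of `b` that both lie on the unique path from `b` to `x` coincide. -/
lemma two_nbrs (hT : G.IsTree) {b x y₁ y₂ : V} (h1 : G.Adj b y₁) (h2 : G.Adj b y₂)
    (m1 : y₁ ∈ (tpath hT b x).support) (m2 : y₂ ∈ (tpath hT b x).support) : y₁ = y₂ := by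
  classical
  have key : ∀ {y : V} (h : G.Adj b y) (m : y ∈ (tpath hT b x).support),
      (tpath hT b x).getVert 1 = y := by
    intro y h m
    have htake : (tpath hT b x).takeUntil y m = SimpleGraph.Walk.cons h SimpleGraph.Walk.nil := by
      have hp : ((tpath hT b x).takeUntil y m).IsPath := (tpath_isPath hT b x).takeUntil m
      have hq : (SimpleGraph.Walk.cons h (SimpleGraph.Walk.nil : G.Walk y y)).IsPath := by
        rw [SimpleGraph.Walk.cons_isPath_iff]
        exact ⟨SimpleGraph.Walk.IsPath.nil, by simp [h.ne]⟩
      rw [tpath_unique hT hp, tpath_unique hT hq]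
    have : tpath hT b x =
        SimpleGraph.Walk.cons h ((tpath hT b x).dropUntil y m) := by
      conv_lhs => rw [← (tpath hT b x).take_spec m]
      rw [htake]
      simp
    rw [this]; simp [SimpleGraph.Walk.getVert_cons_succ]
  rw [← key h1 m1, key h2 m2]

/-- In a branch hanging off `b` through its neighbour `u`, there is a leaf. -/
lemma exists_leaf [Fintype V] [DecidableRel G.Adj] (hT : G.IsTree) {b u : V}
    (hbu : G.Adj b u) :
    ∃ x, G.degree x = 1 ∧ u ∈ (tpath hT b x).support := by
  classical
  have hne : (Finset.univ.filter fun z => u ∈ (tpath hT b z).support).Nonempty := by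
    refine ⟨u, ?_⟩
    simp only [Finset.mem_filter, Finset.mem_univ, true_and]
    exact (tpath hT b u).end_mem_support
  obtain ⟨z, hz, hmax⟩ := Finset.exists_max_image _ (fun z => (tpath hT b z).length) hne
  simp only [Finset.mem_filter, Finset.mem_univ, true_and] at hz
  have hzb : z ≠ b := by
    rintro rfl
    have : tpath hT z z = SimpleGraph.Walk.nil := (tpath_unique hT SimpleGraph.Walk.IsPath.nil).symm
    rw [this] at hz
    simp at hz
    exact hbu.ne' hz
  -- z has a neighbour s, the second vertex of the path z → b
  obtain ⟨s, hzs, q, hq⟩ := SimpleGraph.Walk.exists_eq_cons_of_ne hzb (tpath hT z b)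
  refine ⟨z, ?_, hz⟩
  by_contra hdz
  have hdeg1 : 1 ≤ G.degree z := by
    rw [← SimpleGraph.card_neighborFinset_eq_degree]
    exact Finset.card_pos.2 ⟨s, (SimpleGraph.mem_neighborFinset G z s).2 hzs⟩
  have hdeg2 : 1 < G.degree z := lt_of_le_of_ne hdeg1 (Ne.symm hdz)
  rw [← SimpleGraph.card_neighborFinset_eq_degree] at hdeg2
  obtain ⟨z', hz'mem, hz's⟩ := Finset.exists_mem_ne hdeg2 s
  have hz'adj : G.Adj z z' := (SimpleGraph.mem_neighborFinset G z z').1 hz'mem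
  have hz'n : z' ∉ (tpath hT b z).support := by
    intro hmem
    have hmem' : z' ∈ (tpath hT z b).support := (mem_tpath_comm hT).1 hmem
    have hsmem : s ∈ (tpath hT z b).support := by
      rw [hq]
      simp [q.start_mem_support]
    exact hz's (two_nbrs hT hz'adj hzs hmem' hsmem)
  -- extend the path, contradicting maximality
  have hext : tpath hT b z' = (tpath hT b z).concat hz'adj := tpath_concat hT hz'adj hz'n
  have hz'in : z' ∈ Finset.univ.filter fun y => u ∈ (tpath hT b y).support := by
    simp only [Finset.mem_filter, Finset.mem_univ, true_and]
    rw [hext, SimpleGraph.Walk.support_concat]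
    exact List.mem_append_left _ hz
  have := hmax z' hz'in
  rw [hext, SimpleGraph.Walk.length_concat] at this
  omega

/-- The set of leaves `x` such that the path from `x` to `v` passes through `u`,
i.e. the leaves on the `u`-side of the edge `u v`. -/
noncomputable def closerSet [Fintype V] [DecidableRel G.Adj] (hT : G.IsTree) (u v : V) :
    Finset V :=
  @Finset.filter _ (fun x => u ∈ (tpath hT x v).support) (Classical.decPred _) (leaves G)

lemma mem_closerSet [Fintype V] [DecidableRel G.Adj] (hT : G.IsTree) {u v x : V} :
    x ∈ closerSet hT u v ↔ x ∈ leaves G ∧ u ∈ (tpath hT x v).support :=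
  @Finset.mem_filter _ _ (Classical.decPred _) _ _

lemma closerSet_subset [Fintype V] [DecidableRel G.Adj] (hT : G.IsTree) (u v : V) :
    closerSet hT u v ⊆ leaves G :=
  @Finset.filter_subset _ _ (Classical.decPred _) _

lemma closerSet_compl [Fintype V] [DecidableEq V] [DecidableRel G.Adj] (hT : G.IsTree) {u v : V}
    (h : G.Adj u v) :
    closerSet hT v u = leaves G \ closerSet hT u v := by
  ext x
  rw [Finset.mem_sdiff, mem_closerSet, mem_closerSet]
  constructor
  · rintro ⟨hl, hm⟩
    exact ⟨hl, fun hc => ((mem_opp hT h).1 hm) hc.2⟩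
  · rintro ⟨hl, hm⟩
    refine ⟨hl, (mem_opp hT h).2 fun hc => hm ⟨hl, hc⟩⟩

lemma leafStatus_diff [Fintype V] [DecidableEq V] [DecidableRel G.Adj] (hT : G.IsTree) (w : Sym2 V → ℝ)
    {u v : V} (h : G.Adj u v) :
    leafStatus hT w v - leafStatus hT w u =
      w s(u, v) * (((closerSet hT u v).card : ℝ) - ((closerSet hT v u).card : ℝ)) := by
  have hsum : leafStatus hT w v - leafStatus hT w u
      = ∑ x ∈ leaves G, (tdist hT w x v - tdist hT w x u) := by
    rw [leafStatus, leafStatus, ← Finset.sum_sub_distrib]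
    refine Finset.sum_congr rfl fun x _ => by rw [tdist_comm hT w v x, tdist_comm hT w u x]
  have hsplit : ∑ x ∈ leaves G, (tdist hT w x v - tdist hT w x u)
      = (∑ x ∈ leaves G \ closerSet hT u v, (tdist hT w x v - tdist hT w x u)) +
        ∑ x ∈ closerSet hT u v, (tdist hT w x v - tdist hT w x u) :=
    (Finset.sum_sdiff (closerSet_subset hT u v)).symm
  have h1 : ∑ x ∈ closerSet hT u v, (tdist hT w x v - tdist hT w x u)
      = ((closerSet hT u v).card : ℝ) * w s(u, v) := by
    rw [Finset.sum_congr rfl fun x hx => ?_, Finset.sum_const, nsmul_eq_mul]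
    have hm := (mem_closerSet hT).1 hx
    rw [dist_eq_of_mem hT w h hm.2]
    ring
  have h2 : ∑ x ∈ leaves G \ closerSet hT u v, (tdist hT w x v - tdist hT w x u)
      = ((closerSet hT v u).card : ℝ) * (-(w s(u, v))) := by
    rw [← closerSet_compl hT h]
    rw [Finset.sum_congr rfl fun x hx => ?_, Finset.sum_const, nsmul_eq_mul]
    have hm := (mem_closerSet hT).1 hx
    have := dist_eq_of_mem hT w h.symm hm.2
    rw [Sym2.eq_swap] at this
    rw [this]
    ring
  rw [hsum, hsplit, h1, h2]
  ring

end Aux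

/-- along a path `(v_0, …, v_k)` starting at a vertex `v_0` of
minimum leaf-status, the leaf-status satisfies
`ℓ(v_0) ≤ ℓ(v_1) < ℓ(v_2) < … < ℓ(v_k)`. -/
theorem stmt6 {V : Type*} [Fintype V] {G : SimpleGraph V} [DecidableRel G.Adj]
    (hT : G.IsTree) (w : Sym2 V → ℝ)
    (hw : ∀ e ∈ G.edgeSet, ∃ n : ℕ+, w e = (n : ℝ))
    (hdeg : ∀ x : V, G.degree x ≠ 2)
    (k : ℕ) (v : ℕ → V)
    (hinj : ∀ i j, i ≤ k → j ≤ k → v i = v j → i = j)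
    (hadj : ∀ i, i < k → G.Adj (v i) (v (i + 1)))
    (hmin : ∀ y : V, leafStatus hT w (v 0) ≤ leafStatus hT w y) :
    (1 ≤ k → leafStatus hT w (v 0) ≤ leafStatus hT w (v 1)) ∧
    (∀ i, 1 ≤ i → i + 1 ≤ k →
      leafStatus hT w (v i) < leafStatus hT w (v (i + 1))) := by
    classical
  constructor
  · intro _
    exact hmin (v 1)
  · intro i hi1 hik
    have hik' : i < k := by omega
    have hk2 : 2 ≤ k := by omega
    have hwpos : ∀ j, j < k → 0 < w s(v j, v (j+1)) := by
      intro j hj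
      obtain ⟨n, hn⟩ := hw _ (G.mem_edgeSet.2 (hadj j hj))
      rw [hn]
      exact_mod_cast n.pos
    have hcompl : ∀ j, j < k →
        (closerSet hT (v (j+1)) (v j)).card + (closerSet hT (v j) (v (j+1))).card
          = (leaves G).card := by
      intro j hj
      rw [closerSet_compl hT (hadj j hj)]
      exact Finset.card_sdiff_add_card_eq_card (closerSet_subset hT _ _)
    have hA0 : 2 * (closerSet hT (v 1) (v 0)).card ≤ (leaves G).card := by
      have hd := leafStatus_diff hT w (hadj 0 (by omega))
      have h0 : (0:ℝ) ≤ w s(v 0, v 1) *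
          (((closerSet hT (v 0) (v 1)).card : ℝ) - ((closerSet hT (v 1) (v 0)).card : ℝ)) := by
        rw [← hd]
        have := hmin (v 1)
        linarith
      have hpos0 := hwpos 0 (by omega)
      have hle : ((closerSet hT (v 1) (v 0)).card : ℝ)
          ≤ ((closerSet hT (v 0) (v 1)).card : ℝ) := by
        have := (mul_nonneg_iff_of_pos_left hpos0).1 h0
        linarith
      have hle' : (closerSet hT (v 1) (v 0)).card ≤ (closerSet hT (v 0) (v 1)).card := by
        exact_mod_cast hle
      have hc0 := hcompl 0 (by omega)
      simp only [Nat.zero_add] at hc0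
      omega
    have chain : ∀ j, 1 ≤ j → j < k →
        closerSet hT (v (j+1)) (v j) ⊆ closerSet hT (v 2) (v 1) := by
      intro j
      induction j with
      | zero => omega
      | succ m ih =>
        intro _ hmk
        by_cases hm0 : m = 0
        · subst hm0; exact fun x hx => hx
        · have hm1 : 1 ≤ m := by omega
          have hmk' : m < k := by omega
          refine subset_trans ?_ (ih hm1 hmk')
          intro x hx
          rw [mem_closerSet] at hx ⊢
          refine ⟨hx.1, ?_⟩
          refine tpath_nest hT ((hadj (m+1) hmk).symm) ((hadj m hmk').symm) ?_ hx.2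
          intro he
          have := hinj (m+2) m (by omega) (by omega) he
          omega
    have hadj0 : G.Adj (v 0) (v 1) := hadj 0 (by omega)
    have hadj1 : G.Adj (v 1) (v 2) := hadj 1 (by omega)
    have hstrict : (closerSet hT (v 2) (v 1)).card < (closerSet hT (v 1) (v 0)).card := by
      have hv02 : v 0 ≠ v 2 := fun he => by
        have := hinj 0 2 (by omega) (by omega) he; omega
      have hsub : ({v 0, v 2} : Finset V) ⊆ G.neighborFinset (v 1) := by
        intro y hy
        rcases Finset.mem_insert.1 hy with rfl | hy
        · exact (SimpleGraph.mem_neighborFinset _ _ _).2 hadj0.symm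
        · rw [Finset.mem_singleton] at hy; subst hy
          exact (SimpleGraph.mem_neighborFinset _ _ _).2 hadj1
      have hcard2 : ({v 0, v 2} : Finset V).card = 2 := by
        rw [Finset.card_insert_of_notMem (by simp [hv02]), Finset.card_singleton]
      have hdeg3 : 2 < G.degree (v 1) := by
        have h2le : 2 ≤ G.degree (v 1) := by
          rw [← SimpleGraph.card_neighborFinset_eq_degree, ← hcard2]
          exact Finset.card_le_card hsub
        exact lt_of_le_of_ne h2le (Ne.symm (hdeg (v 1)))
      have hpos : 0 < (G.neighborFinset (v 1) \ {v 0, v 2}).card := by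
        rw [Finset.card_sdiff_of_subset hsub, hcard2, SimpleGraph.card_neighborFinset_eq_degree]
        omega
      obtain ⟨u, hu⟩ := Finset.card_pos.1 hpos
      rw [Finset.mem_sdiff, SimpleGraph.mem_neighborFinset] at hu
      obtain ⟨huadj, hune⟩ := hu
      have hu0 : u ≠ v 0 := fun he => hune (by simp [he])
      have hu2 : u ≠ v 2 := fun he => hune (by simp [he])
      obtain ⟨x, hxleaf, hxmem⟩ := exists_leaf hT huadj
      have hxleaves : x ∈ leaves G := by
        rw [leaves, Finset.mem_filter]; exact ⟨Finset.mem_univ x, hxleaf⟩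
      have hxA0 : x ∈ closerSet hT (v 1) (v 0) := by
        rw [mem_closerSet]
        refine ⟨hxleaves, ?_⟩
        rw [mem_opp hT hadj0]
        intro hc
        have hc' : v 0 ∈ (tpath hT (v 1) x).support := (mem_tpath_comm hT).1 hc
        exact hu0 (two_nbrs hT huadj hadj0.symm hxmem hc')
      have hxA1 : x ∉ closerSet hT (v 2) (v 1) := by
        rw [mem_closerSet]
        rintro ⟨-, hc⟩
        have hc' : v 2 ∈ (tpath hT (v 1) x).support := (mem_tpath_comm hT).1 hc
        exact hu2 (two_nbrs hT huadj hadj1 hxmem hc')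
      have hsub10 : closerSet hT (v 2) (v 1) ⊆ closerSet hT (v 1) (v 0) := by
        intro y hy
        rw [mem_closerSet] at hy ⊢
        exact ⟨hy.1, tpath_nest hT hadj1.symm hadj0.symm
          (fun he => by have := hinj 2 0 hk2 (by omega) he; omega) hy.2⟩
      exact Finset.card_lt_card ((Finset.ssubset_iff_of_subset hsub10).2 ⟨x, hxA0, hxA1⟩)
    have hAiled := Finset.card_le_card (chain i hi1 hik')
    have hsumi := hcompl i hik'
    have hlt : (closerSet hT (v (i+1)) (v i)).card < (closerSet hT (v i) (v (i+1))).card := by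
      omega
    have hd := leafStatus_diff hT w (hadj i hik')
    have hposi := hwpos i hik'
    have hfin : (0:ℝ) < w s(v i, v (i+1)) *
        (((closerSet hT (v i) (v (i+1))).card : ℝ) - ((closerSet hT (v (i+1)) (v i)).card : ℝ)) := by
      apply mul_pos hposi
      have : ((closerSet hT (v (i+1)) (v i)).card : ℝ)
          < ((closerSet hT (v i) (v (i+1))).card : ℝ) := by exact_mod_cast hlt
      linarith
    linarith [hd, hfin]
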